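/- Let (G_n) be a lazy random walk on ℤ started at −M (M > 0 integer) with steps +1 with probability p_a = e^{α−1} − e^{−1}, −1 with probability p_h = e^{−α} − e^{−1}, and 0 otherwise, for 0 < α < 1/2. Then the probability that G_n ever reaches 0 equals ((e^α − 1)/(e^{1−α} − 1))^M. -/

import Mathlib

open MeasureTheory ProbabilityTheory Filter Finset

theorem ple_catchup_probability
    {Ω : Type*} [MeasureSpace Ω] [IsProbabilityMeasure (ℙ : Measure Ω)]
    (α : ℝ) (hα0 : 0 < α) (hα : α < 1/2)
    (M : ℕ) (hM : 0 < M)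
    (step : ℕ → Ω → ℤ)
    (hmeas : ∀ i, Measurable (step i))
    (hindep : iIndepFun step ℙ)
    (hup : ∀ i, ℙ {ω | step i ω = 1} =
      ENNReal.ofReal (Real.exp (α - 1) - Real.exp (-1)))
    (hdown : ∀ i, ℙ {ω | step i ω = -1} =
      ENNReal.ofReal (Real.exp (-α) - Real.exp (-1)))
    (hnull : ∀ i, ℙ {ω | step i ω = 0} =
      ENNReal.ofReal (1 - (Real.exp (α - 1) - Real.exp (-1))
        - (Real.exp (-α) - Real.exp (-1))))
    (G : ℕ → Ω → ℤ) (hG0 : ∀ ω, G 0 ω = -(M : ℤ))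
    (hG : ∀ n ω, G (n+1) ω = G n ω + step n ω) :
    ℙ {ω | ∃ n, G n ω = 0} =
      ENNReal.ofReal (((Real.exp α - 1) / (Real.exp (1 - α) - 1)) ^ M) := by
  classical
  set pa : ℝ := Real.exp (α - 1) - Real.exp (-1) with hpa_def
  set ph : ℝ := Real.exp (-α) - Real.exp (-1) with hph_def
  have hpa : 0 < pa := sub_pos.2 (Real.exp_lt_exp.2 (by linarith))
  have hph : 0 < ph := sub_pos.2 (Real.exp_lt_exp.2 (by linarith))
  have hpalt : pa < ph := sub_lt_sub_right (Real.exp_lt_exp.2 (by linarith)) _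
  set r : ℝ := pa / ph with hr_def
  have hr0 : 0 < r := div_pos hpa hph
  have hr1 : r < 1 := (div_lt_one hph).2 hpalt
  have hp0 : 0 ≤ 1 - pa - ph := by
    have c1 := convexOn_exp.2 (Set.mem_univ (-1)) (Set.mem_univ 0)
      (by linarith : (0:ℝ) ≤ 1 - α) hα0.le (by ring)
    have c2 := convexOn_exp.2 (Set.mem_univ (-1)) (Set.mem_univ 0)
      hα0.le (by linarith : (0:ℝ) ≤ 1 - α) (by ring)
    simp only [smul_eq_mul] at c1 c2
    rw [show (1-α) * (-1) + α * 0 = α - 1 by ring] at c1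
    rw [show α * (-1) + (1-α) * 0 = -α by ring] at c2
    simp only [Real.exp_zero] at c1 c2
    simp only [hpa_def, hph_def]; have := Real.exp_pos (-1:ℝ); linarith
  -- G as partial sums
  have hGn : ∀ n ω, G n ω = (∑ i ∈ Finset.range n, step i ω) - M := by
    intro n; induction n with
    | zero => intro ω; simp [hG0 ω]
    | succ n ih => intro ω; rw [hG n ω, ih ω, Finset.sum_range_succ]; ring
  have hGm : ∀ n, Measurable (G n) := by
    intro n
    have : G n = fun ω => (∑ i ∈ Finset.range n, step i ω) - M := funext (hGn n)
    rw [this]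
    exact (Finset.measurable_sum _ fun i _ => hmeas i).sub measurable_const
  -- hitting-by-time-n sets
  set Hs : ℕ → Set Ω := fun n => {ω | ∃ k ≤ n, G k ω = 0} with hHs_def
  have hHsm : ∀ n, MeasurableSet (Hs n) := by
    intro n
    have : Hs n = ⋃ k ∈ Finset.range (n+1), {ω | G k ω = 0} := by
      ext ω; simp [hHs_def, Nat.lt_succ_iff]
    rw [this]
    exact MeasurableSet.biUnion (Finset.range (n+1)).countable_toSet
      fun k _ => (hGm k) (measurableSet_singleton 0)
  -- stopped processes
  set Y : ℕ → Ω → ℝ := fun n ω => if ω ∈ Hs n then 1 else r ^ (-(G n ω)).toNat with hY_def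
  set Z : ℕ → Ω → ℝ := fun n ω => if ω ∈ Hs n then 0 else r ^ (-(G n ω)).toNat with hZ_def
  have hpow_meas : ∀ n, Measurable (fun ω => r ^ (-(G n ω)).toNat) :=
    fun n => (measurable_of_countable (fun z : ℤ => r ^ (-z).toNat)).comp (hGm n)
  have hYm : ∀ n, Measurable (Y n) := fun n =>
    Measurable.ite (hHsm n) measurable_const (hpow_meas n)
  have hZm : ∀ n, Measurable (Z n) := fun n =>
    Measurable.ite (hHsm n) measurable_const (hpow_meas n)
  have hpow01 : ∀ k : ℕ, 0 ≤ r ^ k ∧ r ^ k ≤ 1 :=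
    fun k => ⟨pow_nonneg hr0.le k, pow_le_one₀ hr0.le hr1.le⟩
  have hY01 : ∀ n ω, 0 ≤ Y n ω ∧ Y n ω ≤ 1 := by
    intro n ω; simp only [hY_def]
    split <;> simp [hpow01]
  have hZ01 : ∀ n ω, 0 ≤ Z n ω ∧ Z n ω ≤ 1 := by
    intro n ω; simp only [hZ_def]
    split <;> simp [hpow01]
  have hintb : ∀ (f : Ω → ℝ) (C : ℝ), Measurable f → (∀ᵐ ω, ‖f ω‖ ≤ C) → Integrable f :=
    fun f C hm hb => ⟨hm.aestronglyMeasurable, HasFiniteIntegral.of_bounded hb⟩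
  have hYint : ∀ n, Integrable (Y n) := fun n =>
    hintb (Y n) 1 (hYm n) (ae_of_all _ fun ω => by
      rw [Real.norm_eq_abs, abs_le]; constructor
      · linarith [(hY01 n ω).1]
      · exact (hY01 n ω).2)
  have hZint : ∀ n, Integrable (Z n) := fun n =>
    hintb (Z n) 1 (hZm n) (ae_of_all _ fun ω => by
      rw [Real.norm_eq_abs, abs_le]; constructor
      · linarith [(hZ01 n ω).1]
      · exact (hZ01 n ω).2)
  -- the bad (null) event
  have hsum1 : pa + ph + (1 - pa - ph) = 1 := by ring
  have hstep_ae : ∀ i, ∀ᵐ ω, step i ω = 1 ∨ step i ω = -1 ∨ step i ω = 0 := by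
    intro i
    have h1 : MeasurableSet {ω | step i ω = 1} := hmeas i (measurableSet_singleton 1)
    have h2 : MeasurableSet {ω | step i ω = -1} := hmeas i (measurableSet_singleton (-1))
    have h3 : MeasurableSet {ω | step i ω = 0} := hmeas i (measurableSet_singleton 0)
    have hd23 : Disjoint {ω | step i ω = -1} {ω | step i ω = 0} := by
      rw [Set.disjoint_left]; intro ω ha hb
      simp only [Set.mem_setOf_eq] at ha hb; omega
    have hd123 : Disjoint {ω | step i ω = 1} ({ω | step i ω = -1} ∪ {ω | step i ω = 0}) := by
      rw [Set.disjoint_left]; intro ω ha hb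
      simp only [Set.mem_setOf_eq, Set.mem_union] at ha hb; omega
    have hU : ℙ ({ω | step i ω = 1} ∪ ({ω | step i ω = -1} ∪ {ω | step i ω = 0})) = 1 := by
      rw [measure_union hd123 (h2.union h3), measure_union hd23 h3, hup i, hdown i, hnull i,
        ← ENNReal.ofReal_add hph.le hp0, ← ENNReal.ofReal_add hpa.le (by linarith),
        show pa + (ph + (1 - pa - ph)) = 1 by ring]
      exact ENNReal.ofReal_one
    rw [ae_iff]
    have hco : {ω | ¬(step i ω = 1 ∨ step i ω = -1 ∨ step i ω = 0)} =
        ({ω | step i ω = 1} ∪ ({ω | step i ω = -1} ∪ {ω | step i ω = 0}))ᶜ := by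
      ext ω; simp only [Set.mem_setOf_eq, Set.mem_compl_iff, Set.mem_union]
    rw [hco, measure_compl (h1.union (h2.union h3)) (measure_ne_top _ _), hU]
    simp
  have hGood : ∀ᵐ ω, ∀ i, step i ω = 1 ∨ step i ω = -1 ∨ step i ω = 0 :=
    ae_all_iff.2 hstep_ae
  -- pathwise: before hitting, the walk is strictly negative
  have hneg : ∀ ω, (∀ i, step i ω = 1 ∨ step i ω = -1 ∨ step i ω = 0) →
      ∀ n, ω ∉ Hs n → G n ω < 0 := by
    intro ω hgood n
    induction n with
    | zero =>
      intro _
      rw [hG0 ω]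
      simpa using hM
    | succ n ih =>
      intro hn1
      have hn : ω ∉ Hs n := by
        intro hk; rcases hk with ⟨k, hk, hk0⟩; exact hn1 ⟨k, hk.trans (Nat.le_succ n), hk0⟩
      have h1 : G n ω < 0 := ih hn
      have h2 : G (n+1) ω ≠ 0 := fun h => hn1 ⟨n+1, le_refl _, h⟩
      rw [hG n ω]
      rcases hgood n with h | h | h <;> rw [h] <;> rw [hG n ω, h] at h2 <;> omega
  -- one-step multiplicative structure
  set c : ℤ → ℝ := fun z => if z = 1 then r⁻¹ else if z = -1 then r else 1 with hc_def
  have hYrec : ∀ n, ∀ᵐ ω, Y (n+1) ω =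
      (if ω ∈ Hs n then (1:ℝ) else 0) + Z n ω * c (step n ω) := by
    intro n
    filter_upwards [hGood] with ω hgood
    by_cases hn : ω ∈ Hs n
    · have hn1 : ω ∈ Hs (n+1) := by
        rcases hn with ⟨k, hk, hk0⟩; exact ⟨k, hk.trans (Nat.le_succ n), hk0⟩
      simp only [hY_def, hZ_def, if_pos hn, if_pos hn1, zero_mul, add_zero]
    · have hGneg : G n ω < 0 := hneg ω hgood n hn
      have hYn1 : Y (n+1) ω = r ^ (-(G (n+1) ω)).toNat := by
        simp only [hY_def]
        by_cases h1 : ω ∈ Hs (n+1)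
        · rw [if_pos h1]
          rcases h1 with ⟨k, hk, hk0⟩
          have hkeq : k = n + 1 := by
            by_contra hne
            exact hn ⟨k, by omega, hk0⟩
          rw [hkeq] at hk0
          rw [hk0]
          simp
        · rw [if_neg h1]
      rw [hYn1]
      simp only [hZ_def, if_neg hn]
      rw [hG n ω]
      rcases hgood n with h | h | h
      · rw [h]
        have e1 : (-(G n ω + 1)).toNat = (-(G n ω)).toNat - 1 := by omega
        obtain ⟨m, hm⟩ : ∃ m, (-(G n ω)).toNat = m + 1 := ⟨(-(G n ω)).toNat - 1, by omega⟩
        rw [e1, hm]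
        simp only [hc_def, if_pos rfl, Nat.add_sub_cancel]
        rw [pow_succ, mul_assoc, mul_inv_cancel₀ hr0.ne', mul_one, zero_add]
      · rw [h]
        have e1 : (-(G n ω + -1)).toNat = (-(G n ω)).toNat + 1 := by omega
        rw [e1]
        simp only [hc_def]
        norm_num [pow_succ]
      · rw [h]
        have e1 : (-(G n ω + 0)).toNat = (-(G n ω)).toNat := by omega
        rw [e1]
        simp only [hc_def]
        norm_num
  -- expectation of c (step n) is 1
  have hcint : ∀ n, Integrable (fun ω => c (step n ω)) := by
    intro n
    refine hintb _ r⁻¹ ((measurable_of_countable c).comp (hmeas n)) (ae_of_all _ fun ω => ?_)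
    have h1 : (1:ℝ) ≤ r⁻¹ := (one_le_inv₀ hr0).2 hr1.le
    simp only [hc_def, Real.norm_eq_abs]
    split
    · simp [abs_of_pos (inv_pos.2 hr0)]
    · split
      · rw [abs_of_pos hr0]; linarith
      · rw [abs_one]; exact h1
  have hcexp : ∀ n, ∫ ω, c (step n ω) = 1 := by
    intro n
    have hA1 : MeasurableSet {ω | step n ω = 1} := hmeas n (measurableSet_singleton 1)
    have hB1 : MeasurableSet {ω | step n ω = -1} := hmeas n (measurableSet_singleton (-1))
    have heq : (fun ω => c (step n ω)) = fun ω =>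
        (Set.indicator {ω | step n ω = 1} (fun _ => r⁻¹ - 1) ω
          + Set.indicator {ω | step n ω = -1} (fun _ => r - 1) ω) + 1 := by
      funext ω
      simp only [hc_def, Set.indicator_apply, Set.mem_setOf_eq]
      by_cases h1 : step n ω = 1
      · rw [if_pos h1, if_pos h1, if_neg (by omega)]; ring
      · rw [if_neg h1, if_neg h1]
        by_cases h2 : step n ω = -1
        · rw [if_pos h2, if_pos h2]; ring
        · rw [if_neg h2, if_neg h2]; ring
    rw [heq]
    have hi1 : Integrable (Set.indicator {ω | step n ω = 1} (fun _ => r⁻¹ - 1)) :=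
      (integrable_const _).indicator hA1
    have hi2 : Integrable (Set.indicator {ω | step n ω = -1} (fun _ => r - 1)) :=
      (integrable_const _).indicator hB1
    have hi12 : Integrable (fun ω => Set.indicator {ω | step n ω = 1} (fun _ => r⁻¹ - 1) ω
        + Set.indicator {ω | step n ω = -1} (fun _ => r - 1) ω) := hi1.add hi2
    rw [integral_add hi12 (integrable_const 1), integral_add hi1 hi2,
      integral_indicator_const _ hA1, integral_indicator_const _ hB1, integral_const]
    simp only [measureReal_def]
    rw [hup n, hdown n, ENNReal.toReal_ofReal hpa.le, ENNReal.toReal_ofReal hph.le,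
      measure_univ]
    simp only [smul_eq_mul, ENNReal.toReal_one, one_mul]
    have hx : pa * r⁻¹ = ph := by rw [hr_def]; field_simp
    have hy : ph * r = pa := by rw [hr_def]; field_simp
    nlinarith [hx, hy]
  -- independence of Z n and c (step n)
  have hZc_indep : ∀ n, IndepFun (Z n) (fun ω => c (step n ω)) ℙ := by
    intro n
    have hdisj : Disjoint (Finset.range n) ({n} : Finset ℕ) := by
      rw [Finset.disjoint_singleton_right]; simp
    have hbase := hindep.indepFun_finset (Finset.range n) {n} hdisj hmeas
    set F : (↥(Finset.range n) → ℤ) → ℝ := fun v =>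
      if (∃ k ≤ n, (∑ i ∈ Finset.range k,
          (if h : i ∈ Finset.range n then v ⟨i, h⟩ else 0)) = (M:ℤ)) then 0
      else r ^ ((M:ℤ) - ∑ i ∈ Finset.range n,
          (if h : i ∈ Finset.range n then v ⟨i, h⟩ else 0)).toNat with hF_def
    set g : (↥({n} : Finset ℕ) → ℤ) → ℝ :=
      fun w => c (w ⟨n, Finset.mem_singleton_self n⟩) with hg_def
    have hFZ : Z n = F ∘ (fun ω (i : (Finset.range n : Finset ℕ)) => step i ω) := by
      funext ω
      have hvv : ∀ k, k ≤ n → (∑ i ∈ Finset.range k,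
          (if h : i ∈ Finset.range n then step i ω else 0)) = ∑ i ∈ Finset.range k, step i ω := by
        intro k hk
        refine Finset.sum_congr rfl fun i hi => ?_
        rw [dif_pos (Finset.mem_range.2 (lt_of_lt_of_le (Finset.mem_range.1 hi) hk))]
      simp only [hZ_def, Function.comp_apply, hF_def]
      have hcond : (ω ∈ Hs n) ↔ (∃ k ≤ n, (∑ i ∈ Finset.range k,
          (if h : i ∈ Finset.range n then step i ω else 0)) = (M:ℤ)) := by
        constructor
        · rintro ⟨k, hk, hk0⟩
          refine ⟨k, hk, ?_⟩
          rw [hvv k hk]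
          have := hGn k ω
          omega
        · rintro ⟨k, hk, hk0⟩
          rw [hvv k hk] at hk0
          exact ⟨k, hk, by rw [hGn k ω]; omega⟩
      have hval : (-(G n ω)).toNat = ((M:ℤ) - ∑ i ∈ Finset.range n,
          (if h : i ∈ Finset.range n then step i ω else 0)).toNat := by
        rw [hvv n (le_refl n)]
        have := hGn n ω
        omega
      exact if_congr hcond rfl (by rw [hval])
    have hgc : (fun ω => c (step n ω)) = g ∘ (fun ω (i : (({n}:Finset ℕ) : Finset ℕ)) => step i ω) := by
      funext ω; rfl
    rw [hFZ, hgc]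
    exact hbase.comp (measurable_of_countable F) (measurable_of_countable g)
  -- constancy of the expectation of Y
  have hYZ : ∀ n, ∫ ω, Y n ω = (ℙ (Hs n)).toReal + ∫ ω, Z n ω := by
    intro n
    have hptw : ∀ ω, Y n ω = (Hs n).indicator (fun _ => (1:ℝ)) ω + Z n ω := by
      intro ω
      by_cases h : ω ∈ Hs n <;>
        simp [hY_def, hZ_def, h, Set.indicator_apply]
    calc ∫ ω, Y n ω = ∫ ω, ((Hs n).indicator (fun _ => (1:ℝ)) ω + Z n ω) :=
          integral_congr_ae (ae_of_all _ hptw)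
      _ = (ℙ (Hs n)).toReal + ∫ ω, Z n ω := by
          rw [integral_add ((integrable_const 1).indicator (hHsm n)) (hZint n),
            integral_indicator_const _ (hHsm n)]
          simp
          rfl
  have hYexp : ∀ n, ∫ ω, Y n ω = r ^ M := by
    intro n
    induction n with
    | zero =>
      have hY0 : ∀ ω, Y 0 ω = r ^ M := by
        intro ω
        have hnot : ω ∉ Hs 0 := by
          rintro ⟨k, hk, hk0⟩
          interval_cases k
          rw [hG0 ω] at hk0
          omega
        simp only [hY_def, if_neg hnot, hG0 ω]
        norm_num
      rw [integral_congr_ae (ae_of_all _ hY0), integral_const]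
      simp
    | succ n ih =>
      have hmul_int : Integrable (fun ω => Z n ω * c (step n ω)) := by
        refine hintb _ r⁻¹ ((hZm n).mul ((measurable_of_countable c).comp (hmeas n)))
          (ae_of_all _ fun ω => ?_)
        rw [Real.norm_eq_abs, abs_mul]
        have h1 : |Z n ω| ≤ 1 := by
          rw [abs_le]; exact ⟨by linarith [(hZ01 n ω).1], (hZ01 n ω).2⟩
        have h2 : |c (step n ω)| ≤ r⁻¹ := by
          have hone : (1:ℝ) ≤ r⁻¹ := (one_le_inv₀ hr0).2 hr1.le
          simp only [hc_def]
          split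
          · rw [abs_of_pos (inv_pos.2 hr0)]
          · split
            · rw [abs_of_pos hr0]; linarith
            · rw [abs_one]; exact hone
        calc |Z n ω| * |c (step n ω)| ≤ 1 * r⁻¹ :=
              mul_le_mul h1 h2 (abs_nonneg _) zero_le_one
          _ = r⁻¹ := one_mul _
      calc ∫ ω, Y (n+1) ω
          = ∫ ω, ((if ω ∈ Hs n then (1:ℝ) else 0) + Z n ω * c (step n ω)) :=
            integral_congr_ae (hYrec n)
        _ = (∫ ω, (if ω ∈ Hs n then (1:ℝ) else 0)) + ∫ ω, Z n ω * c (step n ω) := by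
            have hii : Integrable (fun ω => if ω ∈ Hs n then (1:ℝ) else 0) := by
              have : (fun ω => if ω ∈ Hs n then (1:ℝ) else 0)
                  = (Hs n).indicator (fun _ => (1:ℝ)) := by
                funext ω; simp [Set.indicator_apply]
              rw [this]
              exact (integrable_const 1).indicator (hHsm n)
            exact integral_add hii hmul_int
        _ = (ℙ (Hs n)).toReal + (∫ ω, Z n ω) * ∫ ω, c (step n ω) := by
            have hprod : ∫ ω, Z n ω * c (step n ω)
                = (∫ ω, Z n ω) * ∫ ω, c (step n ω) :=
              (hZc_indep n).integral_fun_mul_eq_mul_integral (hZint n).1 (hcint n).1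
            rw [hprod]
            congr 1
            have : (fun ω => if ω ∈ Hs n then (1:ℝ) else 0)
                = (Hs n).indicator (fun _ => (1:ℝ)) := by
              funext ω; simp [Set.indicator_apply]
            rw [this, integral_indicator_const _ (hHsm n)]
            simp
            rfl
        _ = (ℙ (Hs n)).toReal + ∫ ω, Z n ω := by rw [hcexp n, mul_one]
        _ = ∫ ω, Y n ω := (hYZ n).symm
        _ = r ^ M := ih
  -- SLLN: G n → -∞ a.e.
  have hSLLN : ∀ᵐ ω, Tendsto (fun n => (-(G n ω)).toNat) atTop atTop := by
    set X : ℕ → Ω → ℝ := fun i ω => ((step i ω : ℤ) : ℝ) with hX_def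
    have hXm : ∀ i, Measurable (X i) :=
      fun i => (measurable_of_countable (fun z : ℤ => (z:ℝ))).comp (hmeas i)
    have hXint : Integrable (X 0) := by
      refine hintb _ 1 (hXm 0) ?_
      filter_upwards [hstep_ae 0] with ω h
      rcases h with h | h | h <;> simp [hX_def, h]
    have hident : ∀ i, IdentDistrib (X i) (X 0) ℙ ℙ := by
      intro i
      have hbadi : ℙ {ω | ¬(step i ω = 1 ∨ step i ω = -1 ∨ step i ω = 0)} = 0 :=
        ae_iff.1 (hstep_ae i)
      have hbad0 : ℙ {ω | ¬(step 0 ω = 1 ∨ step 0 ω = -1 ∨ step 0 ω = 0)} = 0 :=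
        ae_iff.1 (hstep_ae 0)
      have hmap : Measure.map (step i) ℙ = Measure.map (step 0) ℙ := by
        apply MeasureTheory.Measure.ext_of_singleton
        intro a
        rw [Measure.map_apply (hmeas i) (measurableSet_singleton a),
          Measure.map_apply (hmeas 0) (measurableSet_singleton a)]
        have hpre : ∀ j : ℕ, step j ⁻¹' {a} = {ω | step j ω = a} := by
          intro j; rfl
        rw [hpre i, hpre 0]
        by_cases h1 : a = 1
        · subst h1; rw [hup i, hup 0]
        · by_cases h2 : a = -1
          · subst h2; rw [hdown i, hdown 0]
          · by_cases h3 : a = 0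
            · subst h3; rw [hnull i, hnull 0]
            · have hsub : ∀ j : ℕ, {ω | step j ω = a} ⊆
                  {ω | ¬(step j ω = 1 ∨ step j ω = -1 ∨ step j ω = 0)} := by
                intro j ω hω
                simp only [Set.mem_setOf_eq] at hω ⊢
                rw [hω]
                push_neg
                exact ⟨h1, h2, h3⟩
              rw [measure_mono_null (hsub i) hbadi, measure_mono_null (hsub 0) hbad0]
      have hid : IdentDistrib (step i) (step 0) ℙ ℙ :=
        ⟨(hmeas i).aemeasurable, (hmeas 0).aemeasurable, hmap⟩
      exact hid.comp (measurable_of_countable (fun z : ℤ => (z:ℝ)))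
    have hpair : Pairwise (Function.onFun (IndepFun · · ℙ) X) := by
      intro i j hij
      exact (hindep.indepFun hij).comp
        (measurable_of_countable (fun z : ℤ => (z:ℝ)))
        (measurable_of_countable (fun z : ℤ => (z:ℝ)))
    have hEX : ∫ ω, X 0 ω = pa - ph := by
      have heq : X 0 =ᵐ[ℙ] fun ω =>
          Set.indicator {ω | step 0 ω = 1} (fun _ => (1:ℝ)) ω
            + Set.indicator {ω | step 0 ω = -1} (fun _ => (-1:ℝ)) ω := by
        filter_upwards [hstep_ae 0] with ω h
        rcases h with h | h | h <;>
          simp [hX_def, h, Set.indicator_apply, Set.mem_setOf_eq]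
      have hm1 : MeasurableSet {ω | step 0 ω = 1} := hmeas 0 (measurableSet_singleton 1)
      have hm2 : MeasurableSet {ω | step 0 ω = -1} := hmeas 0 (measurableSet_singleton (-1))
      rw [integral_congr_ae heq,
        integral_add ((integrable_const _).indicator hm1)
          ((integrable_const _).indicator hm2),
        integral_indicator_const _ hm1, integral_indicator_const _ hm2]
      simp only [measureReal_def]
      rw [hup 0, hdown 0, ENNReal.toReal_ofReal hpa.le, ENNReal.toReal_ofReal hph.le]
      simp only [smul_eq_mul]
      ring
    have hslln := strong_law_ae X hXint hpair hident
    rw [hEX] at hslln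
    filter_upwards [hslln] with ω hω
    have hL : pa - ph < 0 := by linarith
    have hev : ∀ᶠ n : ℕ in atTop,
        (n:ℝ)⁻¹ • (∑ i ∈ Finset.range n, X i ω) < (pa - ph)/2 :=
      hω.eventually_lt_const (by linarith)
    have hb : Tendsto (fun n : ℕ => (n:ℝ) * ((pa - ph)/2)) atTop atBot :=
      Tendsto.atTop_mul_const_of_neg (by linarith) tendsto_natCast_atTop_atTop
    have hSb : Tendsto (fun n : ℕ => ∑ i ∈ Finset.range n, X i ω) atTop atBot := by
      refine tendsto_atBot_mono' atTop ?_ hb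
      filter_upwards [hev, eventually_ge_atTop 1] with n hn hn1
      have hnpos : (0:ℝ) < n := by exact_mod_cast hn1
      rw [smul_eq_mul] at hn
      calc (∑ i ∈ Finset.range n, X i ω)
          = (n:ℝ) * ((n:ℝ)⁻¹ * (∑ i ∈ Finset.range n, X i ω)) := by
            field_simp
        _ ≤ (n:ℝ) * ((pa - ph)/2) := by
            apply mul_le_mul_of_nonneg_left hn.le hnpos.le
    rw [tendsto_atTop_atTop]
    intro b
    obtain ⟨N, hN⟩ := eventually_atTop.1
      (hSb.eventually (eventually_le_atBot (-(b + M : ℝ))))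
    refine ⟨N, fun n hn => ?_⟩
    have h1 : (∑ i ∈ Finset.range n, X i ω) ≤ -(b + M : ℝ) := hN n hn
    have h2 : ((∑ i ∈ Finset.range n, step i ω : ℤ) : ℝ) ≤ -((b:ℝ) + M) := by
      push_cast
      convert h1 using 2
    have h3 : (∑ i ∈ Finset.range n, step i ω : ℤ) ≤ -((b:ℤ) + M) := by
      exact_mod_cast h2
    have h4 := hGn n ω
    omega
  -- a.e. convergence of Y to the hitting indicator
  set A : Set Ω := {ω | ∃ n, G n ω = 0} with hA_def
  have hAm : MeasurableSet A := by
    have : A = ⋃ n, {ω | G n ω = 0} := by ext ω; simp [hA_def]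
    rw [this]
    exact MeasurableSet.iUnion fun n => (hGm n) (measurableSet_singleton 0)
  have hYlim : ∀ᵐ ω, Tendsto (fun n => Y n ω) atTop (nhds (A.indicator (fun _ => (1:ℝ)) ω)) := by
    filter_upwards [hSLLN] with ω hω
    by_cases hA : ω ∈ A
    · rw [Set.indicator_of_mem hA]
      rcases hA with ⟨n₀, hn₀⟩
      have hconst : ∀ n ≥ n₀, Y n ω = 1 := by
        intro n hn
        simp only [hY_def]
        exact if_pos ⟨n₀, hn, hn₀⟩
      exact tendsto_atTop_of_eventually_const hconst
    · rw [Set.indicator_of_notMem hA]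
      have hnever : ∀ n, ω ∉ Hs n := by
        rintro n ⟨k, hk, hk0⟩
        exact hA ⟨k, hk0⟩
      have hYeq : (fun n => Y n ω) = fun n => r ^ (-(G n ω)).toNat := by
        funext n
        simp only [hY_def]
        exact if_neg (hnever n)
      rw [hYeq]
      exact (tendsto_pow_atTop_nhds_zero_of_lt_one hr0.le hr1).comp hω
  -- dominated convergence
  have hdom : Tendsto (fun n => ∫ ω, Y n ω) atTop (nhds (∫ ω, A.indicator (fun _ => (1:ℝ)) ω)) := by
    refine tendsto_integral_of_dominated_convergence (fun _ => (1:ℝ))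
      (fun n => (hYm n).aestronglyMeasurable) (integrable_const 1)
      (fun n => ae_of_all _ fun ω => ?_) hYlim
    rw [Real.norm_eq_abs, abs_le]
    constructor
    · show -(1:ℝ) ≤ Y n ω
      linarith [(hY01 n ω).1]
    · exact (hY01 n ω).2
  have hInd : ∫ ω, A.indicator (fun _ => (1:ℝ)) ω = (ℙ A).toReal := by
    rw [integral_indicator_const _ hAm]; simp; rfl
  have hPA : (ℙ A).toReal = r ^ M := by
    have h2 : Tendsto (fun n => ∫ ω, Y n ω) atTop (nhds (r ^ M)) := by
      have he : (fun n => ∫ ω, Y n ω) = fun _ => r ^ M := funext fun n => hYexp n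
      rw [he]; exact tendsto_const_nhds
    have := tendsto_nhds_unique hdom h2
    rw [← this, hInd]
  have hrfinal : r = (Real.exp α - 1) / (Real.exp (1 - α) - 1) := by
    have h1 : pa = (Real.exp α - 1) * Real.exp (-1) := by
      simp only [hpa_def]
      rw [show α - 1 = α + (-1) by ring, Real.exp_add]; ring
    have h2 : ph = (Real.exp (1 - α) - 1) * Real.exp (-1) := by
      simp only [hph_def]
      rw [show -α = (1 - α) + (-1) by ring, Real.exp_add]; ring
    rw [hr_def, h1, h2, mul_div_mul_right _ _ (Real.exp_ne_zero _)]
  rw [← hrfinal, ← hPA, ENNReal.ofReal_toReal (measure_ne_top _ _)]
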